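/- (Carathéodory for sumsets) Let A ⊂ ℝ^n be finite with 0 ∈ A and A spanning ℝ^n. If v ∈ N·H(A) (the N-dilate of the convex hull of A), then there exists B ⊆ A with |B| = n+1 such that B - B spans ℝ^n and v ∈ N·H(B). -/

import Mathlib

open Pointwise

/-- Carathéodory for sumsets: if `0 ∈ A ⊂ ℝⁿ` finite spans `ℝⁿ`
and `v ∈ N·H(A)`, then there is `B ⊆ A` with `n+1` elements such that `B - B`
spans `ℝⁿ` and `v ∈ N·H(B)`. -/
theorem stmt13 (n N : ℕ) (A : Finset (Fin n → ℝ)) (h0 : (0 : Fin n → ℝ) ∈ A)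
    (hspan : Submodule.span ℝ (A : Set (Fin n → ℝ)) = ⊤)
    (v : Fin n → ℝ) (hv : v ∈ (N : ℝ) • convexHull ℝ (A : Set (Fin n → ℝ))) :
    ∃ B ⊆ A, B.card = n + 1 ∧
      Submodule.span ℝ ((B : Set (Fin n → ℝ)) - (B : Set (Fin n → ℝ))) = ⊤ ∧
      v ∈ (N : ℝ) • convexHull ℝ (B : Set (Fin n → ℝ)) := by
  classical
  obtain ⟨w, hw, rfl⟩ := hv
  rw [convexHull_eq_union] at hw
  simp only [Set.mem_iUnion] at hw
  obtain ⟨C, hCA, hCai, hwC⟩ := hw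
  -- C is nonempty
  obtain ⟨p₁, hp₁⟩ : ∃ p, p ∈ (C : Set (Fin n → ℝ)) := by
    by_contra h
    push_neg at h
    have : (C : Set (Fin n → ℝ)) = ∅ := Set.eq_empty_iff_forall_notMem.mpr h
    rw [this, convexHull_empty] at hwC
    exact hwC
  have hp₁A : p₁ ∈ (A : Set (Fin n → ℝ)) := hCA hp₁
  -- linear independence of differences
  have h_li : LinearIndependent ℝ
      (fun v => v : (fun p => (p -ᵥ p₁ : Fin n → ℝ)) '' ((C : Set (Fin n → ℝ)) \ {p₁}) →
        (Fin n → ℝ)) :=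
    (affineIndependent_set_iff_linearIndependent_vsub ℝ hp₁).mp hCai
  set s₀ : Set (Fin n → ℝ) := (fun p => (p -ᵥ p₁ : Fin n → ℝ)) '' ((C : Set (Fin n → ℝ)) \ {p₁})
  set t : Set (Fin n → ℝ) := (fun p => (p -ᵥ p₁ : Fin n → ℝ)) '' ((A : Set (Fin n → ℝ)) \ {p₁})
  have hst : s₀ ⊆ t := Set.image_mono (Set.diff_subset_diff_left hCA)
  -- t spans
  have hvs : vectorSpan ℝ (A : Set (Fin n → ℝ)) = ⊤ := by
    rw [eq_top_iff, ← hspan]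
    apply Submodule.span_le.mpr
    intro a ha
    have : a -ᵥ (0 : Fin n → ℝ) ∈ (A : Set (Fin n → ℝ)) -ᵥ (A : Set (Fin n → ℝ)) :=
      Set.vsub_mem_vsub ha h0
    rw [vsub_eq_sub, sub_zero] at this
    exact Submodule.subset_span this
  have h_span_t : Submodule.span ℝ t = ⊤ := by
    have := vectorSpan_eq_span_vsub_set_right_ne ℝ hp₁A
    rw [← this, hvs]
  obtain ⟨b, hbt, hsb, htb, hbli⟩ := exists_linearIndepOn_id_extension h_li hst
  have h_span_b : Submodule.span ℝ b = ⊤ := by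
    rw [eq_top_iff, ← h_span_t]
    exact Submodule.span_le.mpr htb
  -- b is finite with card n
  have hb_fin : b.Finite := (A.finite_toSet.diff.image _).subset hbt
  haveI : Fintype b := hb_fin.fintype
  have hbasis : Module.Basis b ℝ (Fin n → ℝ) :=
    Module.Basis.mk (v := ((↑) : b → Fin n → ℝ)) hbli (by rw [Subtype.range_coe]; exact h_span_b.ge)
  have hcard : Fintype.card b = n := by
    have := Module.finrank_eq_card_basis hbasis
    rw [Module.finrank_fin_fun] at this
    omega
  have h0b : (0 : Fin n → ℝ) ∉ b := fun h => hbli.linearIndependent.ne_zero ⟨0, h⟩ rfl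
  -- the finset B
  set B : Finset (Fin n → ℝ) := insert p₁ (hb_fin.toFinset.image (· + p₁)) with hB
  have hBsub : ∀ x ∈ B, x ∈ A := by
    intro x hx
    rw [hB, Finset.mem_insert] at hx
    rcases hx with rfl | hx
    · exact hp₁A
    · obtain ⟨y, hy, rfl⟩ := Finset.mem_image.mp hx
      rw [Set.Finite.mem_toFinset] at hy
      obtain ⟨a, ha, rfl⟩ := hbt hy
      have : (fun p => (p -ᵥ p₁ : Fin n → ℝ)) a + p₁ = a := by simp
      rw [this]
      exact ha.1
  have hCB : (C : Set (Fin n → ℝ)) ⊆ (B : Set (Fin n → ℝ)) := by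
    intro c hc
    by_cases hcp : c = p₁
    · subst hcp; simp [hB]
    · have : c -ᵥ p₁ ∈ s₀ := ⟨c, ⟨hc, hcp⟩, rfl⟩
      have hcb : c -ᵥ p₁ ∈ b := hsb this
      have : c ∈ hb_fin.toFinset.image (· + p₁) := by
        refine Finset.mem_image.mpr ⟨c -ᵥ p₁, ?_, ?_⟩
        · rwa [Set.Finite.mem_toFinset]
        · simp
      exact Finset.mem_coe.mpr (hB ▸ Finset.mem_insert_of_mem this)
  have hp₁notmem : p₁ ∉ hb_fin.toFinset.image (· + p₁) := by
    intro h
    obtain ⟨y, hy, hy'⟩ := Finset.mem_image.mp h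
    rw [Set.Finite.mem_toFinset] at hy
    have hy0 : y = 0 := by simpa using hy'
    exact h0b (hy0 ▸ hy)
  have hBcard : B.card = n + 1 := by
    rw [hB, Finset.card_insert_of_notMem hp₁notmem,
      Finset.card_image_of_injective _ (add_left_injective p₁),
      Set.Finite.card_toFinset]
    simp [hcard]
  refine ⟨B, fun x hx => hBsub x hx, hBcard, ?_, ?_⟩
  · rw [eq_top_iff, ← h_span_b]
    apply Submodule.span_le.mpr
    intro x hx
    apply Submodule.subset_span
    refine ⟨x + p₁, ?_, p₁, ?_, add_sub_cancel_right x p₁⟩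
    · have : x + p₁ ∈ hb_fin.toFinset.image (· + p₁) :=
        Finset.mem_image.mpr ⟨x, (Set.Finite.mem_toFinset _).mpr hx, rfl⟩
      exact Finset.mem_coe.mpr (hB ▸ Finset.mem_insert_of_mem this)
    · simp [hB]
  · exact Set.smul_mem_smul_set (convexHull_mono hCB hwC)
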